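/- Let (M,d,μ) be a metric measure space with a σ-finite doubling Borel measure and μ(M) = ∞, and let g ∈ L²_loc(μ). If A ≥ 0 is such that |∫_M a g dμ| ≤ A for every (1,2)-atom a on M, then for every ball B one has (μ(B)^{-1} ∫_B |g − g_B|² dμ)^{1/2} ≤ 2A; in particular g ∈ BMO(M) with ‖g‖_{BMO} ≤ 2A. -/

import Mathlib

open MeasureTheory Metric Filter ENNReal

noncomputable section

universe u

/-- A `(1,2)`-atom on a metric measure space `(M, d, μ)`: a function in `L²(μ)` supported
in a closed ball `B`, with `∫_M a dμ = 0` and `(μ(B)⁻¹ ∫_B |a|² dμ)^{1/2} ≤ μ(B)⁻¹`. -/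
def Is12Atom {M : Type u} [MetricSpace M] [MeasurableSpace M] (μ : Measure M)
    (a : M → ℝ) : Prop :=
  ∃ (x : M) (r : ℝ), 0 < r ∧
    MemLp a 2 μ ∧
    (∀ y, y ∉ closedBall x r → a y = 0) ∧
    (∫ y, a y ∂μ) = 0 ∧
    ((μ (closedBall x r))⁻¹ *
      ∫⁻ y in closedBall x r, (‖a y‖₊ : ℝ≥0∞) ^ (2 : ℝ) ∂μ) ^ ((1 : ℝ) / 2)
      ≤ (μ (closedBall x r))⁻¹

/-- The average `g_B = μ(B)⁻¹ ∫_B g dμ` of `g` on the closed ball `B = B̄(x,r)`. -/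
def ballAverage {M : Type u} [MetricSpace M] [MeasurableSpace M] (μ : Measure M)
    (g : M → ℝ) (x : M) (r : ℝ) : ℝ :=
  (μ (closedBall x r)).toReal⁻¹ * ∫ y in closedBall x r, g y ∂μ

/-- **Theorem (testing against atoms gives a BMO bound).**
Let `(M,d,μ)` be a metric measure space with σ-finite doubling Borel measure and
`μ(M) = ∞`, and let `g ∈ L²_loc(μ)`.  If `A ≥ 0` and `|∫_M a g dμ| ≤ A` for every
`(1,2)`-atom `a`, then for every ball `B` one has
`(μ(B)⁻¹ ∫_B |g - g_B|² dμ)^{1/2} ≤ 2A`; in particular `g ∈ BMO(M)` with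
`μ(B)⁻¹ ∫_B |g - g_B| dμ ≤ 2A` for every ball `B`. -/
theorem bmo_bound_of_uniform_atom_pairing
    {M : Type u} [MetricSpace M] [MeasurableSpace M] [BorelSpace M]
    (μ : Measure M) [SigmaFinite μ]
    (hdoubling : ∃ D : ℝ≥0∞, ∀ (x : M) (r : ℝ), 0 < r →
      μ (closedBall x (2 * r)) ≤ D * μ (closedBall x r))
    (hinfinite : μ Set.univ = ∞)
    (g : M → ℝ)
    (hloc : ∀ (x : M) (r : ℝ), 0 < r → MemLp g 2 (μ.restrict (closedBall x r)))
    (A : ℝ) (hA : 0 ≤ A)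
    (hpair : ∀ a : M → ℝ, Is12Atom μ a → |∫ y, a y * g y ∂μ| ≤ A) :
    ∀ (x : M) (r : ℝ), 0 < r →
      Real.sqrt ((μ (closedBall x r)).toReal⁻¹ *
          ∫ y in closedBall x r, (g y - ballAverage μ g x r) ^ 2 ∂μ) ≤ 2 * A ∧
      (μ (closedBall x r)).toReal⁻¹ *
          ∫ y in closedBall x r, |g y - ballAverage μ g x r| ∂μ ≤ 2 * A := by
  intro x r hr
  set B := closedBall x r with hBdef
  have hB : MeasurableSet B := measurableSet_closedBall
  set c := ballAverage μ g x r with hcdef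
  set V := (μ B).toReal with hVdef
  by_cases hV0 : V = 0
  · have h0 : V⁻¹ = 0 := by rw [hV0]; norm_num
    rw [h0]
    constructor
    · rw [zero_mul, Real.sqrt_zero]; linarith
    · rw [zero_mul]; linarith
  -- main case: 0 < μ B < ∞
  have hVnn : 0 ≤ V := ENNReal.toReal_nonneg
  have hVpos : 0 < V := lt_of_le_of_ne hVnn (Ne.symm hV0)
  have hμtop : μ B ≠ ∞ := by
    intro h
    rw [hVdef, h] at hV0
    simp at hV0
  haveI : IsFiniteMeasure (μ.restrict B) :=
    ⟨by rwa [Measure.restrict_apply_univ, lt_top_iff_ne_top]⟩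
  have hg2 : MemLp g 2 (μ.restrict B) := hloc x r hr
  have hh2 : MemLp (fun y => g y - c) 2 (μ.restrict B) := hg2.sub (memLp_const c)
  have hgint : Integrable g (μ.restrict B) := hg2.integrable one_le_two
  have hhint : Integrable (fun y => g y - c) (μ.restrict B) := hh2.integrable one_le_two
  have hsqint : Integrable (fun y => (g y - c) ^ 2) (μ.restrict B) := hh2.integrable_sq
  have hmean : ∫ y in B, (g y - c) ∂μ = 0 := by
    rw [integral_sub hgint (integrable_const c), integral_const, measureReal_restrict_apply_univ, measureReal_def,
      ← hVdef, smul_eq_mul, hcdef, ballAverage, ← hBdef, ← hVdef]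
    field_simp
    ring
  set S := ∫ y in B, (g y - c) ^ 2 ∂μ with hSdef
  have hS0 : 0 ≤ S := integral_nonneg fun y => sq_nonneg _
  -- Key claim
  have key : Real.sqrt (V⁻¹ * S) ≤ A := by
    by_cases hSz : S = 0
    · rw [hSz, mul_zero, Real.sqrt_zero]; exact hA
    have hSpos : 0 < S := lt_of_le_of_ne hS0 (Ne.symm hSz)
    set N := Real.sqrt (V⁻¹ * S) with hNdef
    have hNpos : 0 < N := Real.sqrt_pos.mpr (by positivity)
    have hN2 : N ^ 2 = V⁻¹ * S := Real.sq_sqrt (by positivity)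
    have hSVN : S = V * N ^ 2 := by rw [hN2]; field_simp
    set k := (V * N)⁻¹ with hkdef
    have hknn : 0 ≤ k := by positivity
    set a : M → ℝ := B.indicator (fun y => k * (g y - c)) with hadef
    have ha_mem : ∀ y ∈ B, a y = k * (g y - c) := fun y hy => Set.indicator_of_mem hy _
    have ha2 : MemLp a 2 μ :=
      (memLp_indicator_iff_restrict hB).mpr (hh2.const_mul k)
    have hksq : Integrable (fun y => (k * (g y - c)) ^ 2) (μ.restrict B) := by
      simp_rw [mul_pow]
      exact hsqint.const_mul _
    have hatom : Is12Atom μ a := by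
      refine ⟨x, r, hr, ha2, fun y hy => Set.indicator_of_notMem hy _, ?_, ?_⟩
      · rw [hadef, integral_indicator hB, integral_const_mul, hmean, mul_zero]
      · -- size condition
        have hlint : ∫⁻ y in closedBall x r, (‖a y‖₊ : ℝ≥0∞) ^ (2 : ℝ) ∂μ
            = ENNReal.ofReal (k ^ 2 * S) := by
          have h1 : ∀ᵐ y ∂(μ.restrict B), (‖a y‖₊ : ℝ≥0∞) ^ (2 : ℝ)
              = ENNReal.ofReal ((k * (g y - c)) ^ 2) := by
            filter_upwards [ae_restrict_mem hB] with y hy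
            rw [ha_mem y hy, ← enorm_eq_nnnorm, Real.enorm_eq_ofReal_abs,
              ENNReal.ofReal_rpow_of_nonneg (abs_nonneg _) (by norm_num)]
            congr 1
            rw [show ((2:ℝ) = ((2:ℕ):ℝ)) by norm_num, Real.rpow_natCast, sq_abs]
          rw [← hBdef, lintegral_congr_ae h1,
            ← ofReal_integral_eq_lintegral_ofReal hksq
              (Filter.Eventually.of_forall fun y => sq_nonneg _)]
          congr 1
          simp_rw [mul_pow]
          rw [integral_const_mul]
        rw [← hBdef, hlint]
        have hμB : μ B = ENNReal.ofReal V := (ENNReal.ofReal_toReal hμtop).symm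
        rw [hμB, ← ENNReal.ofReal_inv_of_pos hVpos,
          ← ENNReal.ofReal_mul (by positivity),
          ENNReal.ofReal_rpow_of_nonneg (by positivity) (by norm_num)]
        apply ENNReal.ofReal_le_ofReal
        have heq : V⁻¹ * (k ^ 2 * S) = (V⁻¹) ^ 2 := by
          rw [hkdef, hSVN]
          have hN0 : N ≠ 0 := ne_of_gt hNpos
          field_simp
        rw [heq, ← Real.sqrt_eq_rpow, Real.sqrt_sq (by positivity)]
    -- pairing value
    have hval : ∫ y, a y * g y ∂μ = N := by
      have hfun : (fun y => a y * g y)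
          = B.indicator (fun y => k * ((g y - c) * g y)) := by
        funext y
        by_cases hy : y ∈ B
        · rw [ha_mem y hy, Set.indicator_of_mem hy]; ring
        · rw [hadef, Set.indicator_of_notMem hy, Set.indicator_of_notMem hy, zero_mul]
      rw [hfun, integral_indicator hB, integral_const_mul]
      have hsplit : ∫ y in B, (g y - c) * g y ∂μ = S := by
        have : (fun y => (g y - c) * g y) = fun y => (g y - c) ^ 2 + c * (g y - c) := by
          funext y; ring
        rw [this, integral_add hsqint (hhint.const_mul c), integral_const_mul, hmean,
          mul_zero, add_zero, hSdef]
      rw [hsplit, hSVN, hkdef]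
      have hN0 : N ≠ 0 := ne_of_gt hNpos
      field_simp
    have := hpair a hatom
    rw [hval, abs_of_pos hNpos] at this
    exact this
  constructor
  · calc Real.sqrt (V⁻¹ * S) ≤ A := key
      _ ≤ 2 * A := by linarith
  · -- Cauchy-Schwarz for the first moment
    have hconj : (2:ℝ).HolderConjugate 2 := Real.holderConjugate_iff.mpr ⟨one_lt_two, by norm_num⟩
    have h2 : ENNReal.ofReal (2:ℝ) = 2 := by norm_num
    have hCS := integral_mul_norm_le_Lp_mul_Lq (μ := μ.restrict B) hconj
      (f := fun y => g y - c) (g := fun _ => (1:ℝ)) (h2 ▸ hh2) (h2 ▸ memLp_const 1)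
    have hsq_eq : ∫ y in B, ‖g y - c‖ ^ (2:ℝ) ∂μ = S := by
      apply integral_congr_ae
      filter_upwards with y
      rw [show ((2:ℝ) = ((2:ℕ):ℝ)) by norm_num, Real.rpow_natCast, Real.norm_eq_abs, sq_abs]
    have hone_eq : ∫ y in B, ‖(1:ℝ)‖ ^ (2:ℝ) ∂μ = V := by
      simp [integral_const, Measure.restrict_apply_univ, measureReal_def, hVdef]
    have habs : ∫ y in B, |g y - c| ∂μ ≤ S ^ ((1:ℝ)/2) * V ^ ((1:ℝ)/2) := by
      calc ∫ y in B, |g y - c| ∂μ = ∫ y in B, ‖g y - c‖ * ‖(1:ℝ)‖ ∂μ := by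
            simp [Real.norm_eq_abs]
        _ ≤ (∫ y in B, ‖g y - c‖ ^ (2:ℝ) ∂μ) ^ ((1:ℝ)/2)
            * (∫ y in B, ‖(1:ℝ)‖ ^ (2:ℝ) ∂μ) ^ ((1:ℝ)/2) := hCS
        _ = S ^ ((1:ℝ)/2) * V ^ ((1:ℝ)/2) := by rw [hsq_eq, hone_eq]
    have hsqrtV : Real.sqrt V ≠ 0 := by positivity
    have hVss : Real.sqrt V * Real.sqrt V = V := Real.mul_self_sqrt hVnn
    have hfinal : V⁻¹ * (S ^ ((1:ℝ)/2) * V ^ ((1:ℝ)/2)) = Real.sqrt (V⁻¹ * S) := by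
      rw [← Real.sqrt_eq_rpow, ← Real.sqrt_eq_rpow,
        Real.sqrt_mul (inv_nonneg.mpr hVnn), Real.sqrt_inv]
      field_simp
      nlinarith [Real.sqrt_nonneg S, Real.sqrt_nonneg V]
    calc V⁻¹ * ∫ y in B, |g y - c| ∂μ
        ≤ V⁻¹ * (S ^ ((1:ℝ)/2) * V ^ ((1:ℝ)/2)) := by
          apply mul_le_mul_of_nonneg_left habs (inv_nonneg.mpr hVnn)
      _ = Real.sqrt (V⁻¹ * S) := hfinal
      _ ≤ A := key
      _ ≤ 2 * A := by linarith
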